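/- There exists a constant c > 0 such that the following holds. Let V be a finite type, let G be a simple graph on V, and let d be a natural number with 1 ≤ d and with the maximum degree of G at most d. Then there exists an injective map p : V → EuclideanSpace ℝ (Fin 3) with ‖p v‖ = 1 for all v (all vertices lie on the unit sphere), such that for every vertex v and every pair of distinct neighbors u, w of v in G, the angle between p u − p v and p w − p v is at least c/d. -/

import Mathlib

open Real InnerProductGeometry

variable {E : Type*} [NormedAddCommGroup E] [InnerProductSpace ℝ E]

local notation "⟪" x ", " y "⟫" => @inner ℝ _ _ x y

lemma sphere_angle_ge (a b c : E) (ha : ‖a‖ = 1) (hb : ‖b‖ = 1) (hc : ‖c‖ = 1) :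
    ‖a - b‖ / 2 ≤ angle (a - c) (b - c) := by
  have hab : ‖a - b‖ ≤ 2 := by
    calc ‖a - b‖ ≤ ‖a‖ + ‖b‖ := norm_sub_le a b
    _ = 2 := by rw [ha, hb]; norm_num
  have hpi : (2:ℝ) ≤ π := by linarith [Real.pi_gt_three]
  by_cases hac : a = c
  · subst hac; rw [sub_self, angle_zero_left]; linarith
  by_cases hbc : b = c
  · subst hbc; rw [sub_self, angle_zero_right]; linarith
  have hx : a - c ≠ 0 := sub_ne_zero_of_ne hac
  have hy : b - c ≠ 0 := sub_ne_zero_of_ne hbc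
  have hxn : 0 < ‖a - c‖ := norm_pos_iff.mpr hx
  have hyn : 0 < ‖b - c‖ := norm_pos_iff.mpr hy
  -- main: sin (angle) ≥ ‖a - b‖/2
  have key : ‖a - b‖ / 2 ≤ Real.sin (angle (a - c) (b - c)) := by
    have hs := sin_angle_mul_norm_mul_norm (a - c) (b - c)
    set p := ⟪a, c⟫ with hp
    set q := ⟪b, c⟫ with hq
    set u := ⟪a, b⟫ with hu
    have haa : ⟪a, a⟫ = 1 := by rw [real_inner_self_eq_norm_mul_norm, ha]; norm_num
    have hbb : ⟪b, b⟫ = 1 := by rw [real_inner_self_eq_norm_mul_norm, hb]; norm_num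
    have hcc : ⟪c, c⟫ = 1 := by rw [real_inner_self_eq_norm_mul_norm, hc]; norm_num
    have hCS := real_inner_mul_inner_self_le (a - p • c) (b - q • c)
    have hca : ⟪c, a⟫ = p := by rw [hp]; exact real_inner_comm a c
    have hcb : ⟪c, b⟫ = q := by rw [hq]; exact real_inner_comm b c
    have hba : ⟪b, a⟫ = u := by rw [hu]; exact real_inner_comm a b
    simp only [inner_sub_left, inner_sub_right, real_inner_smul_left, real_inner_smul_right,
      haa, hbb, hcc, hca, hcb, hba, ← hp, ← hq, ← hu] at hCS
    have hxx : ⟪a - c, a - c⟫ = 2 - 2 * p := by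
      simp only [inner_sub_left, inner_sub_right, haa, hcc, hca, ← hp]; ring
    have hyy : ⟪b - c, b - c⟫ = 2 - 2 * q := by
      simp only [inner_sub_left, inner_sub_right, hbb, hcc, hcb, ← hq]; ring
    have hxy : ⟪a - c, b - c⟫ = 1 + u - p - q := by
      simp only [inner_sub_left, inner_sub_right, hcc, hca, hcb, hba, ← hp, ← hq, ← hu]; ring
    have hab2 : ‖a - b‖ ^ 2 = 2 - 2 * u := by
      rw [← real_inner_self_eq_norm_sq]
      simp only [inner_sub_left, inner_sub_right, haa, hbb, hba, ← hu]; ring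
    have hx2 : ‖a - c‖ ^ 2 = 2 - 2 * p := by rw [← real_inner_self_eq_norm_sq, hxx]
    have hy2 : ‖b - c‖ ^ 2 = 2 - 2 * q := by rw [← real_inner_self_eq_norm_sq, hyy]
    rw [hxx, hyy, hxy] at hs
    -- goal: ‖a-b‖/2 ≤ sin angle
    have hsq : (‖a - b‖ / 2 * (‖a - c‖ * ‖b - c‖)) ^ 2 ≤
        (2 - 2 * p) * (2 - 2 * q) - (1 + u - p - q) * (1 + u - p - q) := by
      have expand : (‖a - b‖ / 2 * (‖a - c‖ * ‖b - c‖)) ^ 2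
          = (2 - 2 * u) / 4 * ((2 - 2 * p) * (2 - 2 * q)) := by
        rw [mul_pow, mul_pow, div_pow, hab2, hx2, hy2]; ring
      rw [expand]
      nlinarith [hCS]
    have hnn : 0 ≤ ‖a - b‖ / 2 * (‖a - c‖ * ‖b - c‖) := by positivity
    have hy0 : (0:ℝ) ≤ (2 - 2 * p) * (2 - 2 * q) - (1 + u - p - q) * (1 + u - p - q) :=
      le_trans (sq_nonneg _) hsq
    have h2 := (Real.le_sqrt hnn hy0).mpr hsq
    rw [← hs] at h2
    have hN : 0 < ‖a - c‖ * ‖b - c‖ := mul_pos hxn hyn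
    exact le_of_mul_le_mul_right h2 hN
  have := Real.sin_le (angle_nonneg (a - c) (b - c))
  linarith


open Real

noncomputable def pt (θ φ : ℝ) : EuclideanSpace ℝ (Fin 3) :=
  (WithLp.equiv 2 (Fin 3 → ℝ)).symm ![cos θ * cos φ, cos θ * sin φ, sin θ]

lemma pt_norm (θ φ : ℝ) : ‖pt θ φ‖ = 1 := by
  rw [EuclideanSpace.norm_eq]
  have h : ∑ i, ‖pt θ φ i‖ ^ 2 = 1 := by
    rw [Fin.sum_univ_three]
    simp only [pt, WithLp.equiv_symm_apply, PiLp.toLp_apply, Matrix.cons_val_zero, Matrix.cons_val_one,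
      Matrix.head_cons, Matrix.cons_val_two, Matrix.tail_cons, Real.norm_eq_abs, sq_abs]
    nlinarith [sin_sq_add_cos_sq θ, sin_sq_add_cos_sq φ]
  rw [h, Real.sqrt_one]

lemma coord_le_norm (x : EuclideanSpace ℝ (Fin 3)) (i : Fin 3) : |x i| ≤ ‖x‖ := by
  rw [EuclideanSpace.norm_eq]
  have h1 : |x i| = √(‖x i‖ ^ 2) := by
    rw [Real.sqrt_sq_eq_abs, Real.norm_eq_abs, abs_abs]
  rw [h1]
  apply Real.sqrt_le_sqrt
  exact Finset.single_le_sum (fun j _ => sq_nonneg ‖x j‖) (Finset.mem_univ i)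

lemma pt_sub_coord2 (θ θ' φ φ' : ℝ) : (pt θ φ - pt θ' φ') 2 = sin θ - sin θ' := by
  simp only [PiLp.sub_apply, pt, WithLp.equiv_symm_apply, PiLp.toLp_apply, Matrix.cons_val_two,
    Matrix.tail_cons, Matrix.head_cons]

lemma pt_same_lat (θ φ φ' : ℝ) :
    ‖pt θ φ - pt θ φ'‖ ^ 2 = 2 * cos θ ^ 2 * (1 - cos (φ - φ')) := by
  rw [EuclideanSpace.norm_eq, Real.sq_sqrt (Finset.sum_nonneg fun i _ => sq_nonneg _)]
  rw [Fin.sum_univ_three]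
  simp only [PiLp.sub_apply, pt, WithLp.equiv_symm_apply, PiLp.toLp_apply, Matrix.cons_val_zero,
    Matrix.cons_val_one, Matrix.head_cons, Matrix.cons_val_two, Matrix.tail_cons,
    Real.norm_eq_abs, sq_abs]
  rw [Real.cos_sub]
  nlinarith [sin_sq_add_cos_sq φ, sin_sq_add_cos_sq φ']

lemma cos_one_ge_half : (1:ℝ)/2 ≤ cos 1 := by
  rw [← Real.cos_pi_div_three]
  exact Real.cos_le_cos_of_nonneg_of_le_pi (by norm_num)
    (by linarith [Real.pi_pos]) (by linarith [Real.pi_gt_three])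

lemma sin_gap {a b : ℝ} (h0 : 0 ≤ b) (hba : b ≤ a) (ha : a ≤ 1) :
    (a - b) / π ≤ sin a - sin b := by
  rw [Real.sin_sub_sin]
  have hpi := Real.pi_gt_three
  have h1 : (1:ℝ)/2 ≤ cos ((a + b)/2) := by
    calc (1:ℝ)/2 ≤ cos 1 := cos_one_ge_half
    _ ≤ cos ((a+b)/2) := by
        apply Real.cos_le_cos_of_nonneg_of_le_pi (by linarith) (by linarith) (by linarith)
  have h2 : 2/π * ((a - b)/2) ≤ sin ((a - b)/2) :=
    Real.mul_le_sin (by linarith) (by linarith)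
  have hs0 : 0 ≤ sin ((a-b)/2) :=
    le_trans (mul_nonneg (div_nonneg (by norm_num) (by linarith)) (by linarith)) h2
  have h4 : 2/π * ((a-b)/2) = (a-b)/π := by field_simp
  nlinarith [h2, h1, hs0]

lemma cos_band {t Δ : ℝ} (ht0 : 0 ≤ t) (htπ : t ≤ π) (h1 : t ≤ Δ) (h2 : Δ ≤ 2*π - t) :
    cos Δ ≤ cos t := by
  rcases le_or_gt Δ π with h | h
  · exact Real.cos_le_cos_of_nonneg_of_le_pi ht0 h h1
  · have : cos Δ = cos (2*π - Δ) := (Real.cos_two_pi_sub Δ).symm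
    rw [this]
    exact Real.cos_le_cos_of_nonneg_of_le_pi ht0 (by linarith) (by linarith)

lemma one_sub_cos_ge {t : ℝ} (ht0 : 0 ≤ t) (htπ : t ≤ π) : 2 * (t/π)^2 ≤ 1 - cos t := by
  have hpi := Real.pi_gt_three
  have h2 : 2/π * (t/2) ≤ sin (t/2) := Real.mul_le_sin (by linarith) (by linarith)
  have hct : cos t = 2 * cos (t/2)^2 - 1 := by
    have := Real.cos_two_mul (t/2)
    rw [show 2*(t/2) = t by ring] at this
    linarith
  have hsc := Real.sin_sq_add_cos_sq (t/2)
  have h3 : 2/π * (t/2) = t/π := by field_simp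
  have hge : t/π ≤ sin (t/2) := by rw [← h3]; exact h2
  have htp0 : 0 ≤ t/π := div_nonneg ht0 (by linarith)
  nlinarith [mul_self_le_mul_self htp0 hge]

lemma cos_ge_half {θ : ℝ} (h0 : 0 ≤ θ) (h1 : θ ≤ 1) : (1:ℝ)/2 ≤ cos θ := by
  calc (1:ℝ)/2 ≤ cos 1 := cos_one_ge_half
  _ ≤ cos θ := Real.cos_le_cos_of_nonneg_of_le_pi h0 (by linarith [Real.pi_gt_three]) h1

lemma sep_lat_real {D : ℝ} (hD : 1 ≤ D) {a b φ φ' : ℝ} (h0 : 0 ≤ b)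
    (hab : b + 1/D ≤ a) (ha : a ≤ 1) : 1/(4*D) ≤ ‖pt a φ - pt b φ'‖ := by
  have hD0 : (0:ℝ) < D := by linarith
  have hpi := Real.pi_gt_three
  have hgap : (a - b)/π ≤ sin a - sin b := sin_gap h0 (by nlinarith [one_div_pos.mpr hD0]) ha
  have h2 : 1/(4*D) ≤ (a - b)/π := by
    rw [div_le_div_iff₀ (by linarith) (by linarith)]
    have : 1/D ≤ a - b := by linarith
    have h4 : π ≤ 4 := Real.pi_le_four
    calc (1:ℝ) * π ≤ 4 * (1/D) * D := by field_simp; linarith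
    _ ≤ (a - b) * (4*D) := by nlinarith
  have h3 : sin a - sin b ≤ |(pt a φ - pt b φ') 2| := by
    rw [pt_sub_coord2]
    exact le_abs_self _
  calc 1/(4*D) ≤ sin a - sin b := le_trans h2 hgap
  _ ≤ |(pt a φ - pt b φ') 2| := h3
  _ ≤ ‖pt a φ - pt b φ'‖ := coord_le_norm _ _

lemma sep_lng_real {D : ℝ} (hD : 1 ≤ D) {θ φ φ' : ℝ} (h0 : 0 ≤ θ) (h1 : θ ≤ 1)
    (hl : π/D ≤ φ - φ') (hr : φ - φ' ≤ 2*π - π/D) : 1/(4*D) ≤ ‖pt θ φ - pt θ φ'‖ := by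
  have hD0 : (0:ℝ) < D := by linarith
  have hpi := Real.pi_gt_three
  have htpos : 0 ≤ π/D := by positivity
  have htle : π/D ≤ π := by
    rw [div_le_iff₀ hD0]; nlinarith
  have hband : cos (φ - φ') ≤ cos (π/D) := cos_band htpos htle hl hr
  have hcos : 2 * ((π/D)/π)^2 ≤ 1 - cos (π/D) := one_sub_cos_ge htpos htle
  have hsimp : (π/D)/π = 1/D := by field_simp
  rw [hsimp] at hcos
  have hsq := pt_same_lat θ φ φ'
  have hc2 : (1:ℝ)/2 ≤ cos θ := cos_ge_half h0 h1
  have hlow : (1/D)^2 ≤ ‖pt θ φ - pt θ φ'‖^2 := by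
    rw [hsq]
    have h14 : (1:ℝ)/2 * (1/2) ≤ cos θ * cos θ := mul_self_le_mul_self (by norm_num) hc2
    nlinarith [h14, hcos, hband, sq_nonneg (1/D)]
  have hn := norm_nonneg (pt θ φ - pt θ φ')
  have h1D : 0 < 1/D := by positivity
  have : 1/D ≤ ‖pt θ φ - pt θ φ'‖ := by nlinarith
  calc 1/(4*D) ≤ 1/D := by rw [div_le_div_iff₀ (by linarith) hD0]; nlinarith
  _ ≤ _ := this

lemma pt_ne_real {θ φ φ' : ℝ} (h0 : 0 ≤ θ) (h1 : θ ≤ 1) (hl : 0 < φ - φ')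
    (hr : φ - φ' ≤ π) : pt θ φ ≠ pt θ φ' := by
  have hpi := Real.pi_gt_three
  have hcos : cos (φ - φ') < 1 := by
    have := Real.cos_lt_cos_of_nonneg_of_le_pi (le_refl 0) hr hl
    rwa [Real.cos_zero] at this
  have hc2 : (1:ℝ)/2 ≤ cos θ := cos_ge_half h0 h1
  intro hEq
  have hsq := pt_same_lat θ φ φ'
  rw [hEq, sub_self, norm_zero] at hsq
  have h14 : (1:ℝ)/2 * (1/2) ≤ cos θ * cos θ := mul_self_le_mul_self (by norm_num) hc2
  nlinarith [h14]

lemma lng_bounds {D N A B Ma Mb : ℝ} (hD : 1 ≤ D) (hN : 1 ≤ N) (hA : A ≤ D - 1)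
    (hB : 0 ≤ B) (hgap : B + 1 ≤ A) (hMa0 : 0 ≤ Ma) (hMa : Ma ≤ N - 1)
    (hMb0 : 0 ≤ Mb) (hMb : Mb ≤ N - 1) :
    π/D ≤ (2*π*(A - B)*N + π*(Ma - Mb))/(D*N) ∧
      (2*π*(A - B)*N + π*(Ma - Mb))/(D*N) ≤ 2*π - π/D := by
  have hπ := Real.pi_pos
  have hD0 : (0:ℝ) < D := by linarith
  have hN0 : (0:ℝ) < N := by linarith
  have hDN : (0:ℝ) < D*N := by positivity
  set S := 2*π*(A - B)*N + π*(Ma - Mb) with hS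
  constructor
  · have h1 : 0 ≤ 2*π*N*((A - B) - 1) := by
      apply mul_nonneg (by positivity); linarith
    have h2 : 0 ≤ π*(Ma + (N - 1 - Mb)) := by
      apply mul_nonneg hπ.le; linarith
    have hSlow : π*N ≤ S := by rw [hS]; nlinarith
    rw [div_le_div_iff₀ hD0 hDN]
    nlinarith [mul_le_mul_of_nonneg_right hSlow hD0.le]
  · have h1 : 0 ≤ 2*π*N*((D - 1) - (A - B)) := by
      apply mul_nonneg (by positivity); linarith
    have h2 : 0 ≤ π*((N - 1 - Ma) + Mb) := by
      apply mul_nonneg hπ.le; linarith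
    have hShigh : S ≤ 2*π*D*N - π*N := by rw [hS]; nlinarith
    have heq : (2*π - π/D) = (2*π*D*N - π*N)/(D*N) := by field_simp
    rw [heq, div_le_div_iff₀ hDN hDN]
    nlinarith [mul_le_mul_of_nonneg_right hShigh hDN.le]

lemma mne_bounds {D N Ma Mb : ℝ} (hD : 1 ≤ D) (hN : 1 ≤ N)
    (hMa : Ma ≤ N - 1) (hMb0 : 0 ≤ Mb) (hgap : Mb + 1 ≤ Ma) :
    0 < (π*(Ma - Mb))/(D*N) ∧ (π*(Ma - Mb))/(D*N) ≤ π := by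
  have hπ := Real.pi_pos
  have hD0 : (0:ℝ) < D := by linarith
  have hN0 : (0:ℝ) < N := by linarith
  have hDN : (0:ℝ) < D*N := by positivity
  constructor
  · apply div_pos _ hDN
    nlinarith
  · rw [div_le_iff₀ hDN]
    nlinarith [mul_le_mul_of_nonneg_left hMa hπ.le, mul_le_mul_of_nonneg_right hN0.le hπ.le,
      mul_le_mul_of_nonneg_right (show N ≤ D*N by nlinarith) hπ.le]


lemma greedy_coloring {V : Type} [Fintype V] (R : V → V → Prop)
    (hsym : ∀ u w, R u w → R w u) (hirr : ∀ v, ¬ R v v) (k : ℕ) (hk : 0 < k)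
    (hdeg : ∀ v, ∃ s : Finset V, (∀ w, R v w → w ∈ s) ∧ s.card < k) :
    ∃ f : V → Fin k, ∀ u w, R u w → f u ≠ f w := by
  classical
  have main : ∀ s : Finset V, ∃ f : V → Fin k, ∀ u ∈ s, ∀ w ∈ s, R u w → f u ≠ f w := by
    intro s
    induction s using Finset.induction_on with
    | empty => exact ⟨fun _ => ⟨0, hk⟩, by simp⟩
    | @insert a s ha ih =>
      obtain ⟨f, hf⟩ := ih
      obtain ⟨t, hcov, hcard⟩ := hdeg a
      -- colors used by related elements in s
      set used : Finset (Fin k) := (s.filter (fun w => R a w)).image f with hused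
      have hused_card : used.card < k := by
        calc used.card ≤ (s.filter (fun w => R a w)).card := Finset.card_image_le
        _ ≤ t.card := Finset.card_le_card (by
              intro w hw
              rw [Finset.mem_filter] at hw
              exact hcov w hw.2)
        _ < k := hcard
      have : ∃ c : Fin k, c ∉ used := by
        by_contra h
        push_neg at h
        have : (Finset.univ : Finset (Fin k)) ⊆ used := fun c _ => h c
        have := Finset.card_le_card this
        simp [Fintype.card_fin] at this
        omega
      obtain ⟨c, hc⟩ := this
      refine ⟨Function.update f a c, ?_⟩
      intro u hu w hw hR
      rcases Finset.mem_insert.mp hu with rfl | hu' <;>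
        rcases Finset.mem_insert.mp hw with h | hw'
      · exact absurd (h ▸ hR) (hirr _)
      · rw [Function.update_self, Function.update_of_ne (fun h' : w = u => ha (h' ▸ hw')) ]
        intro hEq
        exact hc (hEq ▸ Finset.mem_image_of_mem f (Finset.mem_filter.mpr ⟨hw', hR⟩))
      · subst h
        rw [Function.update_self, Function.update_of_ne (fun h' : u = w => ha (h' ▸ hu'))]
        intro hEq
        exact hc (hEq.symm ▸ Finset.mem_image_of_mem f
          (Finset.mem_filter.mpr ⟨hu', hsym _ _ hR⟩))
      · rw [Function.update_of_ne (fun h' : u = a => ha (h' ▸ hu')),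
          Function.update_of_ne (fun h' : w = a => ha (h' ▸ hw'))]
        exact hf u hu' w hw' hR
  obtain ⟨f, hf⟩ := main Finset.univ
  exact ⟨f, fun u w h => hf u (Finset.mem_univ u) w (Finset.mem_univ w) h⟩


open Real InnerProductGeometry

/-- Theorem 1 of the paper: there is a constant `c > 0` such that every
graph of maximum degree at most `d` (with `d ≥ 1`) has a 3D straight-line
drawing with all vertices on the unit sphere and angular resolution at
least `c / d`. -/
theorem exists_sphere_drawing_angular_resolution :
    ∃ c : ℝ, 0 < c ∧
      ∀ (V : Type) [Fintype V] (G : SimpleGraph V) [DecidableRel G.Adj] (d : ℕ),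
        1 ≤ d → G.maxDegree ≤ d →
        ∃ p : V → EuclideanSpace ℝ (Fin 3),
          Function.Injective p ∧
          (∀ v, ‖p v‖ = 1) ∧
          ∀ v u w : V, G.Adj v u → G.Adj v w → u ≠ w →
            c / d ≤ angle (p u - p v) (p w - p v) := by
  classical
  refine ⟨1/8, by norm_num, ?_⟩
  intro V _ G _ d hd hmax
  -- the "conflict" relation: distinct vertices with a common neighbor
  set R : V → V → Prop := fun u w => u ≠ w ∧ ∃ v, G.Adj v u ∧ G.Adj v w with hR
  have hsym : ∀ u w, R u w → R w u := by
    rintro u w ⟨hne, v, h1, h2⟩; exact ⟨hne.symm, v, h2, h1⟩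
  have hirr : ∀ v, ¬ R v v := by rintro v ⟨hne, _⟩; exact hne rfl
  have hkpos : 0 < d * d := Nat.mul_pos hd hd
  have hdeg : ∀ u, ∃ s : Finset V, (∀ w, R u w → w ∈ s) ∧ s.card < d * d := by
    intro u
    set B := (G.neighborFinset u).biUnion (fun v => G.neighborFinset v) with hB
    refine ⟨B.erase u, ?_, ?_⟩
    · rintro w ⟨hne, v, h1, h2⟩
      refine Finset.mem_erase.mpr ⟨hne.symm, ?_⟩
      exact Finset.mem_biUnion.mpr ⟨v, (G.mem_neighborFinset u v).mpr h1.symm,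
        (G.mem_neighborFinset v w).mpr h2⟩
    · have hBcard : B.card ≤ d * d := by
        refine le_trans (Finset.card_biUnion_le) ?_
        calc ∑ v ∈ G.neighborFinset u, (G.neighborFinset v).card
            ≤ ∑ _v ∈ G.neighborFinset u, d := by
              refine Finset.sum_le_sum fun v _ => ?_
              rw [G.card_neighborFinset_eq_degree]
              exact le_trans (G.degree_le_maxDegree v) hmax
        _ = (G.neighborFinset u).card * d := by rw [Finset.sum_const, smul_eq_mul]
        _ ≤ d * d := by
              have := le_trans (G.degree_le_maxDegree u) hmax
              rw [G.card_neighborFinset_eq_degree]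
              exact Nat.mul_le_mul_right d this
      rcases Finset.eq_empty_or_nonempty (G.neighborFinset u) with hemp | ⟨v, hv⟩
      · have : B = ∅ := by rw [hB, hemp]; simp
        rw [this]
        simpa using hkpos
      · have huB : u ∈ B := Finset.mem_biUnion.mpr ⟨v, hv, by
          rw [SimpleGraph.mem_neighborFinset] at hv ⊢
          exact hv.symm⟩
        rw [Finset.card_erase_of_mem huB]
        omega
  obtain ⟨f, hf⟩ := greedy_coloring R hsym hirr (d * d) hkpos hdeg
  set n := Fintype.card V with hn
  set e := Fintype.equivFin V with he
  set θ : V → ℝ := fun v => ((f v : ℕ) / d : ℕ) / (d : ℝ) with hθ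
  set φ : V → ℝ := fun v =>
    2 * π * ((f v : ℕ) % d : ℕ) / (d : ℝ) + π * (e v : ℕ) / ((d : ℝ) * (n : ℝ)) with hφ
  have hdR : (1:ℝ) ≤ (d:ℝ) := by exact_mod_cast hd
  have hdR0 : (0:ℝ) < (d:ℝ) := by linarith
  have hpi := Real.pi_gt_three
  -- basic bounds, valid for any vertex
  have hθ0 : ∀ v, 0 ≤ θ v := fun v => by positivity
  have hθ1 : ∀ v, θ v ≤ 1 := by
    intro v
    rw [hθ, div_le_one hdR0]
    have : (f v : ℕ) / d < d := Nat.div_lt_of_lt_mul (f v).isLt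
    exact_mod_cast this.le
  have hnpos : ∀ _v : V, (0:ℝ) < (n:ℝ) := by
    intro v
    have : 0 < n := by rw [hn]; exact Fintype.card_pos_iff.mpr ⟨v⟩
    exact_mod_cast this
  -- φ differences for equal latitude
  have hφdiff : ∀ a b : V, φ a - φ b =
      (2 * π * (((f a : ℕ) % d : ℕ) - ((f b : ℕ) % d : ℕ)) * n
        + π * ((e a : ℕ) - (e b : ℕ))) / ((d:ℝ) * n) := by
    intro a b
    have hN := hnpos a
    rw [hφ]
    field_simp
    ring
  -- far-apart claim for different colors
  have far : ∀ u w : V, f u ≠ f w → 1/(4*(d:ℝ)) ≤ ‖pt (θ u) (φ u) - pt (θ w) (φ w)‖ := by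
    have lat : ∀ a b : V, (f b : ℕ) / d < (f a : ℕ) / d →
        1/(4*(d:ℝ)) ≤ ‖pt (θ a) (φ a) - pt (θ b) (φ b)‖ := by
      intro a b hab
      refine sep_lat_real hdR (by positivity) ?_ (hθ1 a)
      rw [hθ]
      simp only
      rw [← add_div]
      have h1 : (((f b : ℕ) / d : ℕ) : ℝ) + (1:ℝ) ≤ (((f a : ℕ) / d : ℕ) : ℝ) := by
        have h2 : ((f b : ℕ) / d) + 1 ≤ (f a : ℕ) / d := hab
        exact_mod_cast h2
      gcongr
    have lng : ∀ a b : V, (f a : ℕ) / d = (f b : ℕ) / d → (f b : ℕ) % d < (f a : ℕ) % d →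
        1/(4*(d:ℝ)) ≤ ‖pt (θ a) (φ a) - pt (θ b) (φ b)‖ := by
      intro a b hiEq hab
      have hθEq : θ b = θ a := by rw [hθ]; simp only; rw [hiEq]
      rw [hθEq]
      have hN := hnpos a
      have hNn : 1 ≤ (n:ℝ) := by
        have : 0 < n := by rw [hn]; exact Fintype.card_pos_iff.mpr ⟨a⟩
        exact_mod_cast this
      have hMa : ((e a : ℕ) : ℝ) ≤ (n:ℝ) - 1 := by
        have : (e a : ℕ) < n := (e a).isLt
        have : (e a : ℕ) ≤ n - 1 := by omega
        have h2 : ((e a : ℕ) : ℝ) ≤ ((n - 1 : ℕ) : ℝ) := by exact_mod_cast this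
        rwa [Nat.cast_sub (by omega), Nat.cast_one] at h2
      have hMb : ((e b : ℕ) : ℝ) ≤ (n:ℝ) - 1 := by
        have : (e b : ℕ) < n := (e b).isLt
        have : (e b : ℕ) ≤ n - 1 := by omega
        have h2 : ((e b : ℕ) : ℝ) ≤ ((n - 1 : ℕ) : ℝ) := by exact_mod_cast this
        rwa [Nat.cast_sub (by omega), Nat.cast_one] at h2
      have hJa : (((f a : ℕ) % d : ℕ) : ℝ) ≤ (d:ℝ) - 1 := by
        have : (f a : ℕ) % d ≤ d - 1 := by
          have := Nat.mod_lt (f a : ℕ) (show 0 < d from hd); omega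
        have h2 : (((f a : ℕ) % d : ℕ) : ℝ) ≤ ((d - 1 : ℕ) : ℝ) := by exact_mod_cast this
        rwa [Nat.cast_sub (by omega), Nat.cast_one] at h2
      have hJgap : (((f b : ℕ) % d : ℕ) : ℝ) + 1 ≤ (((f a : ℕ) % d : ℕ) : ℝ) := by
        exact_mod_cast hab
      have hMa0 : (0:ℝ) ≤ ((e a : ℕ) : ℝ) := Nat.cast_nonneg _
      have hMb0 : (0:ℝ) ≤ ((e b : ℕ) : ℝ) := Nat.cast_nonneg _
      have hJb0 : (0:ℝ) ≤ (((f b : ℕ) % d : ℕ) : ℝ) := Nat.cast_nonneg _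
      have hbnds := lng_bounds hdR hNn hJa hJb0 hJgap hMa0 hMa hMb0 hMb
      refine sep_lng_real hdR (hθ0 a) (hθ1 a) ?_ ?_
      · rw [hφdiff a b]; exact hbnds.1
      · rw [hφdiff a b]; exact hbnds.2
    intro u w hne
    by_cases hiEq : (f u : ℕ) / d = (f w : ℕ) / d
    · have hjne : (f u : ℕ) % d ≠ (f w : ℕ) % d := by
        intro hj
        apply hne
        have h3 : (f u : ℕ) = (f w : ℕ) := by
          rw [← Nat.div_add_mod (f u : ℕ) d, ← Nat.div_add_mod (f w : ℕ) d, hiEq, hj]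
        exact Fin.ext h3
      rcases lt_or_gt_of_ne hjne with h | h
      · rw [norm_sub_rev]; exact lng w u hiEq.symm h
      · exact lng u w hiEq h
    · rcases lt_or_gt_of_ne hiEq with h | h
      · rw [norm_sub_rev]; exact lat w u h
      · exact lat u w h
  -- distinctness for same color, different vertex
  have hne_same : ∀ u w : V, f u = f w → u ≠ w → pt (θ u) (φ u) ≠ pt (θ w) (φ w) := by
    have aux : ∀ a b : V, f a = f b → (e b : ℕ) < (e a : ℕ) →
        pt (θ a) (φ a) ≠ pt (θ b) (φ b) := by
      intro a b hfEq hab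
      have hθEq : θ b = θ a := by rw [hθ]; simp only; rw [hfEq]
      rw [hθEq]
      have hN := hnpos a
      have hNn : 1 ≤ (n:ℝ) := by
        have : 0 < n := by rw [hn]; exact Fintype.card_pos_iff.mpr ⟨a⟩
        exact_mod_cast this
      have hgap : ((e b : ℕ) : ℝ) + 1 ≤ ((e a : ℕ) : ℝ) := by exact_mod_cast hab
      have hJEq : (((f a : ℕ) % d : ℕ) : ℝ) = (((f b : ℕ) % d : ℕ) : ℝ) := by rw [hfEq]
      have hMa : ((e a : ℕ) : ℝ) ≤ (n:ℝ) - 1 := by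
        have h1 : (e a : ℕ) + 1 ≤ n := (e a).isLt
        have h3 : ((e a : ℕ) : ℝ) + 1 ≤ (n:ℝ) := by exact_mod_cast h1
        linarith
      have hMb0 : (0:ℝ) ≤ ((e b : ℕ) : ℝ) := Nat.cast_nonneg _
      have hbnds := mne_bounds hdR hNn hMa hMb0 hgap
      have hsimp : φ a - φ b = (π * (((e a : ℕ) : ℝ) - ((e b : ℕ) : ℝ)))/((d:ℝ)*(n:ℝ)) := by
        rw [hφdiff a b, hJEq]; ring_nf
      refine pt_ne_real (hθ0 a) (hθ1 a) ?_ ?_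
      · rw [hsimp]; exact hbnds.1
      · rw [hsimp]; exact hbnds.2
    intro u w hfEq hne
    have hene : (e u : ℕ) ≠ (e w : ℕ) := by
      intro h
      exact hne (e.injective (Fin.ext h))
    rcases lt_or_gt_of_ne hene with h | h
    · exact (aux w u hfEq.symm h).symm
    · exact aux u w hfEq h
  refine ⟨fun v => pt (θ v) (φ v), ?_, fun v => pt_norm _ _, ?_⟩
  · intro u w hEq
    simp only at hEq
    by_contra hne
    by_cases hfEq : f u = f w
    · exact hne_same u w hfEq hne hEq
    · have := far u w hfEq
      rw [hEq, sub_self, norm_zero] at this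
      have hpos : (0:ℝ) < 1/(4*(d:ℝ)) := by positivity
      linarith
  · intro v u w h1 h2 hne
    have hRuw : R u w := ⟨hne, v, h1, h2⟩
    have hfne : f u ≠ f w := hf u w hRuw
    have hfar := far u w hfne
    have hangle := sphere_angle_ge (pt (θ u) (φ u)) (pt (θ w) (φ w)) (pt (θ v) (φ v))
      (pt_norm _ _) (pt_norm _ _) (pt_norm _ _)
    have heq : 1/8 / (d:ℝ) = 1/(4*(d:ℝ))/2 := by
      rw [div_div, div_div]; ring_nf
    have : 1/8 / (d:ℝ) ≤ ‖pt (θ u) (φ u) - pt (θ w) (φ w)‖ / 2 := by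
      rw [heq]; linarith [hfar]
    exact le_trans this hangle
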